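/- Fix ε > 0 and a positive integer K. Let α ∈ ℝ^K with α_i ≥ 0 for all i and ∑_{i=1}^K α_i = 1, let ℓ : {1,…,K} → [0,1] and c : {1,…,K} → [0,1], and let i* be an index minimizing ℓ over {1,…,K}. Let S = { i ∈ {1,…,K} : c_i ≤ ℓ(i*) and α_i ≥ ε/K }, and define π_i = (1/2)α_i·1[i ∈ S] + (1 − (1/2)∑_{j∈S} α_j)·1[i = i*]. Then ∑_{i=1}^K π_i ℓ_i − ∑_{i=1}^K α_i c_i ≤ ∑_{i∈S} α_i (ℓ_i − c_i) + ε. -/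

import Mathlib

/-- Deterministic content of the per-round regret bound for the modified Thompson
Sampling strategy: `∑ᵢ πᵢℓᵢ − ∑ᵢ αᵢcᵢ ≤ ∑_{i∈S} αᵢ(ℓᵢ − cᵢ) + ε`. -/
theorem per_round_regret_bound
    (ε : ℝ) (hε : 0 < ε) (K : ℕ) (hK : 0 < K)
    (α ℓ c : Fin K → ℝ)
    (hα0 : ∀ i, 0 ≤ α i) (hα1 : ∑ i, α i = 1)
    (hℓ : ∀ i, ℓ i ∈ Set.Icc (0:ℝ) 1) (hc : ∀ i, c i ∈ Set.Icc (0:ℝ) 1)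
    (istar : Fin K) (histar : ∀ j, ℓ istar ≤ ℓ j)
    (S : Finset (Fin K))
    (hS : S = Finset.univ.filter (fun i => c i ≤ ℓ istar ∧ ε / K ≤ α i))
    (π : Fin K → ℝ)
    (hπ : ∀ i, π i = (1/2) * α i * (if i ∈ S then 1 else 0)
        + (1 - (1/2) * ∑ j ∈ S, α j) * (if i = istar then 1 else 0)) :
    ∑ i, π i * ℓ i - ∑ i, α i * c i ≤ (∑ i ∈ S, α i * (ℓ i - c i)) + ε := by
  have hKpos : (0:ℝ) < K := by exact_mod_cast hK
  have hεK : 0 < ε / K := div_pos hε hKpos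
  have hL0 : 0 ≤ ℓ istar := (hℓ istar).1
  have hL1 : ℓ istar ≤ 1 := (hℓ istar).2
  -- rewrite ∑ π ℓ
  have h1 : ∀ i, π i * ℓ i
      = (if i ∈ S then (1/2) * (α i * ℓ i) else 0)
        + (if i = istar then (1 - (1/2) * ∑ j ∈ S, α j) * ℓ istar else 0) := by
    intro i
    rw [hπ]
    by_cases h' : i = istar
    · subst h'
      by_cases h : i ∈ S <;> simp [h] <;> ring
    · by_cases h : i ∈ S <;> simp [h, h'] <;> ring
  have hsum1 : ∑ i, π i * ℓ i
      = (1/2) * (∑ i ∈ S, α i * ℓ i) + (1 - (1/2) * ∑ j ∈ S, α j) * ℓ istar := by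
    simp only [h1]
    rw [Finset.sum_add_distrib, Finset.sum_ite_mem, Finset.univ_inter,
      Finset.sum_ite_eq' Finset.univ istar]
    simp [Finset.mul_sum]
  -- split ∑ α c
  have hsplit : ∑ i ∈ Finset.univ \ S, α i * c i + ∑ i ∈ S, α i * c i
      = ∑ i, α i * c i :=
    Finset.sum_sdiff (Finset.subset_univ S)
  have hsplitα : ∑ i ∈ Finset.univ \ S, α i + ∑ i ∈ S, α i = 1 := by
    rw [Finset.sum_sdiff (Finset.subset_univ S), hα1]
  -- ∑_S α ℓ ≥ ℓ* ∑_S α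
  have hPL : ℓ istar * ∑ i ∈ S, α i ≤ ∑ i ∈ S, α i * ℓ i := by
    rw [Finset.mul_sum]
    refine Finset.sum_le_sum fun i _ => ?_
    rw [mul_comm]
    exact mul_le_mul_of_nonneg_left (histar i) (hα0 i)
  -- pointwise bound off S
  have hpt : ∀ i ∈ Finset.univ \ S, α i * ℓ istar - ε / K ≤ α i * c i := by
    intro i hi
    have hnotS : i ∉ S := (Finset.mem_sdiff.1 hi).2
    rw [hS, Finset.mem_filter] at hnotS
    push_neg at hnotS
    have hc0 := (hc i).1
    by_cases hci : c i ≤ ℓ istar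
    · have hαi : α i < ε / K := hnotS (Finset.mem_univ i) hci
      have : α i * ℓ istar ≤ α i := by
        nlinarith [hα0 i]
      nlinarith [mul_nonneg (hα0 i) hc0]
    · push_neg at hci
      nlinarith [hα0 i, mul_le_mul_of_nonneg_left hci.le (hα0 i)]
  have hRsum : (ℓ istar) * (∑ i ∈ Finset.univ \ S, α i) - ε
      ≤ ∑ i ∈ Finset.univ \ S, α i * c i := by
    have h2 : ∑ i ∈ Finset.univ \ S, (α i * ℓ istar - ε / K)
        ≤ ∑ i ∈ Finset.univ \ S, α i * c i := Finset.sum_le_sum hpt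
    have h3 : ∑ i ∈ Finset.univ \ S, (α i * ℓ istar - ε / K)
        = (∑ i ∈ Finset.univ \ S, α i) * ℓ istar
          - (Finset.univ \ S).card * (ε / K) := by
      rw [Finset.sum_sub_distrib, ← Finset.sum_mul, Finset.sum_const,
        nsmul_eq_mul]
    have hcard : ((Finset.univ \ S).card : ℝ) ≤ K := by
      have := Finset.card_le_univ (Finset.univ \ S)
      simpa using (Nat.cast_le.2 this : ((Finset.univ \ S).card : ℝ) ≤ (Finset.univ : Finset (Fin K)).card)
    have h4 : ((Finset.univ \ S).card : ℝ) * (ε / K) ≤ ε := by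
      have hKε : (K:ℝ) * (ε / K) = ε := by field_simp
      nlinarith [mul_le_mul_of_nonneg_right hcard hεK.le]
    nlinarith
  have hdiff : ∑ i ∈ S, α i * (ℓ i - c i)
      = ∑ i ∈ S, α i * ℓ i - ∑ i ∈ S, α i * c i := by
    rw [← Finset.sum_sub_distrib]
    exact Finset.sum_congr rfl fun i _ => by ring
  nlinarith [hsum1, hsplit, hsplitα, hPL, hRsum, hdiff]
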